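/- Assume that d+ > d− > 0 satisfy d+ − d− ≥ c√(d+ ln d+), where c > 0 is a sufficiently large absolute constant and d+ is bounded below by a sufficiently large absolute constant. Let p be a skewed probability measure on {−1, 0, 1}. Then P(Z_p < 1) ≤ d+^{−10}; equivalently, P(ψ(Z_p) = 1) ≥ 1 − d+^{−10}. -/

import Mathlib

open Filter Topology

attribute [local instance] Classical.propDecidable

set_option linter.unusedVariables false

noncomputable section


/-! ### Basic functions -/

/-- The clamping function `ψ` restricted to the integers. -/
def psiZ (x : ℤ) : ℤ := max (-1) (min 1 x)

/-- The threshold function `ψ̃` restricted to the integers. -/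
def tpsiZ (x : ℤ) : ℤ := if x ≤ -1 then -1 else 1

/-- `p : ℤ → ℝ` represents a probability measure on `{-1, 0, 1}`. -/
def IsProbOn3 (p : ℤ → ℝ) : Prop :=
  (∀ z, 0 ≤ p z) ∧ (∀ z : ℤ, z ∉ ({-1, 0, 1} : Set ℤ) → p z = 0) ∧ p (-1) + p 0 + p 1 = 1

/-- `p` is skewed: `p(1) ≥ 1 - d₊⁻¹⁰`. -/
def Skewed (dp : ℝ) (p : ℤ → ℝ) : Prop := 1 - (dp ^ 10)⁻¹ ≤ p 1

/-- The point mass at `1`, i.e. `(0,0,1)`. -/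
def delta1 : ℤ → ℝ := fun z => if z = 1 then 1 else 0

/-! ### The operator `T` -/

/-- Convolution of two mass functions on `ℤ`. -/
def convZ (a b : ℤ → ℝ) : ℤ → ℝ := fun z => ∑' w : ℤ, a w * b (z - w)

/-- `n`-fold convolution power (distribution of a sum of `n` i.i.d. copies). -/
def convPow (a : ℤ → ℝ) : ℕ → ℤ → ℝ
  | 0 => fun z => if z = 0 then 1 else 0
  | n + 1 => convZ (convPow a n) a

/-- Poisson mass function with mean `d`. -/
def poisP (d : ℝ) (k : ℕ) : ℝ := Real.exp (-d) * d ^ k / (Nat.factorial k)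

/-- Distribution of `-η` when `η` has distribution `a`. -/
def flipM (a : ℤ → ℝ) : ℤ → ℝ := fun z => a (-z)

/-- The distribution of `Z_p = ∑_{i=1}^{γ₊} η_i - ∑_{i=γ₊+1}^{γ₊+γ₋} η_i` where the `η_i`
are i.i.d. with distribution `p` and `γ₊ ~ Po(d₊)`, `γ₋ ~ Po(d₋)` are independent. -/
def Zdist (dp dm : ℝ) (p : ℤ → ℝ) : ℤ → ℝ := fun z =>
  ∑' k : ℕ, ∑' l : ℕ, poisP dp k * poisP dm l * convZ (convPow p k) (convPow (flipM p) l) z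

/-- The operator `𝒯 = 𝒯_{d₊,d₋}`: the distribution of `ψ(Z_p)`. -/
def Twp (dp dm : ℝ) (p : ℤ → ℝ) : ℤ → ℝ := fun z =>
  if z = 1 then ∑' m : ℕ, Zdist dp dm p (1 + (m : ℤ))
  else if z = 0 then Zdist dp dm p 0
  else if z = -1 then ∑' m : ℕ, Zdist dp dm p (-1 - (m : ℤ))
  else 0

/-- The value `Z` as a function of the outcomes `η : Fin (k+l) → ℤ`, where the first `k`
coordinates form the `γ₊`-group and the remaining `l` the `γ₋`-group. -/
def zsum (k l : ℕ) (η : Fin (k + l) → ℤ) : ℤ :=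
  (∑ j ∈ Finset.univ.filter (fun j : Fin (k + l) => (j : ℕ) < k), η j)
    - ∑ j ∈ Finset.univ.filter (fun j : Fin (k + l) => k ≤ (j : ℕ)), η j

/-- Conditional expectation of
`∑_{i=1}^{γ₊} 1{η_i = -ψ̃(Z)} + ∑_{i=γ₊+1}^{γ₊+γ₋} 1{η_i = ψ̃(Z)}` given `γ₊ = k, γ₋ = l`. -/
def innerPhi (p : ℤ → ℝ) (k l : ℕ) : ℝ :=
  ∑ η ∈ Fintype.piFinset (fun _ : Fin (k + l) => ({-1, 0, 1} : Finset ℤ)),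
    (∏ i, p (η i)) *
      (((Finset.univ.filter (fun i : Fin (k + l) =>
            (i : ℕ) < k ∧ η i = - tpsiZ (zsum k l η))).card : ℝ)
        + ((Finset.univ.filter (fun i : Fin (k + l) =>
            k ≤ (i : ℕ) ∧ η i = tpsiZ (zsum k l η))).card : ℝ))

/-- The functional `φ_{d₊,d₋}`. -/
def phiOp (dp dm : ℝ) (p : ℤ → ℝ) : ℝ :=
  (1 / 2) * ∑' k : ℕ, ∑' l : ℕ, poisP dp k * poisP dm l * innerPhi p k l

/-! ### The L¹-Wasserstein distance on measures on `{-1,0,1}` -/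

/-- `ℓ₁(p,q)`: infimum of `E |X - Y|` over couplings of `p` and `q`. -/
def ell1 (p q : ℤ → ℝ) : ℝ :=
  sInf { r | ∃ ν : ℤ × ℤ → ℝ, (∀ x y, 0 ≤ ν (x, y)) ∧
    (∀ x, ∑ y ∈ ({-1, 0, 1} : Finset ℤ), ν (x, y) = p x) ∧
    (∀ y, ∑ x ∈ ({-1, 0, 1} : Finset ℤ), ν (x, y) = q y) ∧
    r = ∑ x ∈ ({-1, 0, 1} : Finset ℤ), ∑ y ∈ ({-1, 0, 1} : Finset ℤ),
          |(x : ℝ) - (y : ℝ)| * ν (x, y) }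





/-! ### Graphs: restriction, cuts, the core, Warning Propagation -/

/-- Every neighbourhood in a graph on a finite vertex type is finite. -/
noncomputable instance fintypeNeighborSet {V : Type*} [Fintype V] (G : SimpleGraph V) (v : V) :
    Fintype (G.neighborSet v) := Fintype.ofFinite _

/-- The subgraph of `G` consisting of the edges inside `S` (the induced subgraph on `S`,
viewed as a graph on the ambient vertex set; vertices outside `S` are isolated). -/
def restrictG {V : Type*} (G : SimpleGraph V) (S : Set V) : SimpleGraph V where
  Adj x y := G.Adj x y ∧ x ∈ S ∧ y ∈ S
  symm := ⟨fun x y h => ⟨G.adj_symm h.1, h.2.2, h.2.1⟩⟩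
  loopless := ⟨fun x h => G.loopless.irrefl x h.1⟩

/-- `cut(G, σ)` for the boundary condition `σ` on `U`: the least number of edges of `G` joining
vertices of different colours, over all `±1`-colourings `τ` agreeing with `σ` on `U`.
(The set of ordered pairs of adjacent bichromatic vertices has twice the size of the
corresponding edge set.) -/
def cutW {V : Type*} (G : SimpleGraph V) (U : Set V) (σ : V → ℤ) : ℕ :=
  sInf { k | ∃ τ : V → ℤ, (∀ x, τ x = 1 ∨ τ x = -1) ∧ (∀ x ∈ U, τ x = σ x) ∧
    2 * k = {p : V × V | G.Adj p.1 p.2 ∧ τ p.1 ≠ τ p.2}.ncard }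

/-- The defining property of the core. -/
def CoreProp {V : Type*} (G : SimpleGraph V) (σ : V → ℤ) (dp dm c : ℝ) (U : Set V) : Prop :=
  ∀ u ∈ U,
    |(({w | G.Adj u w ∧ σ u * σ w = 1}.ncard : ℝ) - dp)| ≤ c / 4 * Real.sqrt (dp * Real.log dp) ∧
    |(({w | G.Adj u w ∧ σ u * σ w = -1}.ncard : ℝ) - dm)| ≤ c / 4 * Real.sqrt (dp * Real.log dp) ∧
    ({w | G.Adj u w} \ U).ncard ≤ 100

/-- The core: the largest subset satisfying `CoreProp`, i.e. the union of all such subsets. -/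
def coreSet {V : Type*} (G : SimpleGraph V) (σ : V → ℤ) (dp dm c : ℝ) : Set V :=
  ⋃₀ { U | CoreProp G σ dp dm c U }

/-- The sets `C_v^{(t)}`. -/
def CvStage {V : Type*} (G : SimpleGraph V) (K : Set V) (v : V) : ℕ → Set V
  | 0 => {v} ∪ {w | G.Adj v w}
  | t + 1 => CvStage G K v t ∪ ⋃ u ∈ (CvStage G K v t \ K), {w | G.Adj u w}

/-- The set `C_v = ⋃_t C_v^{(t)}`. -/
def CvSet {V : Type*} (G : SimpleGraph V) (K : Set V) (v : V) : Set V :=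
  ⋃ t, CvStage G K v t

/-- Warning Propagation messages `μ_{v→w}(t | G, σ)` with initial condition `σ` on `U`. -/
def wpMsg {V : Type*} (G : SimpleGraph V) [∀ v : V, Fintype (G.neighborSet v)]
    (U : Set V) (σ : V → ℤ) : ℕ → V → V → ℤ
  | 0, v, _ => if v ∈ U then σ v else 0
  | t + 1, v, w => psiZ (∑ u ∈ (G.neighborFinset v).erase w, wpMsg G U σ t u v)

/-- `μ_v(t|G,σ) = ∑_{w ∈ ∂v} μ_{w→v}(t|G,σ)`. -/
def wpVal {V : Type*} (G : SimpleGraph V) [∀ v : V, Fintype (G.neighborSet v)]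
    (U : Set V) (σ : V → ℤ) (t : ℕ) (v : V) : ℤ :=
  ∑ w ∈ G.neighborFinset v, wpMsg G U σ t w v

/-- The maximum distance from `w` to any vertex reachable from `w` in `G`. -/
def hgt {V : Type*} (G : SimpleGraph V) (w : V) : ℕ :=
  sSup ((G.dist w) '' { u | G.Reachable w u })

/-- `G_v`: the subgraph of `G` induced on `C_v` (ambient form). -/
def GvG {V : Type*} (G : SimpleGraph V) (K : Set V) (v : V) : SimpleGraph V :=
  restrictG G (CvSet G K v)

/-- `w_{↑v}`: the neighbour of `w` on the path from `w` to `v` in `G_v`. -/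
def parentOf {V : Type*} (G : SimpleGraph V) (K : Set V) (v w : V) : V :=
  @Classical.epsilon V ⟨v⟩ fun x =>
    (GvG G K v).Adj w x ∧ (GvG G K v).dist x v + 1 = (GvG G K v).dist w v

/-- `G_v` with the edge `{w, w_{↑v}}` removed. -/
def GdelG {V : Type*} (G : SimpleGraph V) (K : Set V) (v w : V) : SimpleGraph V :=
  (GvG G K v).deleteEdges {s(w, parentOf G K v w)}

/-- `h_{w→v}`: the maximum distance between `w` and any other vertex of `G_{w→v}`. -/
def hdir {V : Type*} (G : SimpleGraph V) (K : Set V) (v w : V) : ℕ :=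
  hgt (GdelG G K v w) w

/-- `C_{w→v}`: the vertex set of the component of `w` in `G_v` minus the edge `{w, w_{↑v}}`. -/
def Cdir {V : Type*} (G : SimpleGraph V) (K : Set V) (v w : V) : Set V :=
  { u | (GdelG G K v w).Reachable w u }

/-- `G_{w→v}`: the component of `w` in `G_v` minus the edge `{w, w_{↑v}}`. -/
def Gdir {V : Type*} (G : SimpleGraph V) (K : Set V) (v w : V) : SimpleGraph V :=
  restrictG (GdelG G K v w) (Cdir G K v w)

/-- `h_v`: the maximum distance between `v` and any other vertex of `G_v`. -/
def hvG {V : Type*} (G : SimpleGraph V) (K : Set V) (v : V) : ℕ :=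
  hgt (GvG G K v) v

/-- `μ*_{w→v} = μ_{w→w_{↑v}}(h_{w→v}+1 | G, σ)`. -/
def muStarDir {V : Type*} (G : SimpleGraph V) [∀ v : V, Fintype (G.neighborSet v)]
    (K : Set V) (σ : V → ℤ) (v w : V) : ℤ :=
  wpMsg G Set.univ σ (hdir G K v w + 1) w (parentOf G K v w)

/-- `μ*_v = μ_v(h_v+1 | G, σ)`. -/
def muStarV {V : Type*} (G : SimpleGraph V) [∀ v : V, Fintype (G.neighborSet v)]
    (K : Set V) (σ : V → ℤ) (v : V) : ℤ :=
  wpVal G Set.univ σ (hvG G K v + 1) v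

/-- The ball of radius `t` around `v` in `G`. -/
def ballSet {V : Type*} (G : SimpleGraph V) (v : V) (t : ℕ) : Set V :=
  { u | G.Reachable v u ∧ G.dist v u ≤ t }

lemma mem_ballSet_self {V : Type*} (G : SimpleGraph V) (v : V) (t : ℕ) : v ∈ ballSet G v t :=
  ⟨SimpleGraph.Reachable.refl v, by simp [SimpleGraph.dist_self]⟩

/-- `∂^t(G,r,σ) ≅ ∂^t(H,r',τ)`: a root- and label-preserving isomorphism between the
balls of radius `t`. -/
def RootedBallIso {V W : Type*} (G : SimpleGraph V) (σ : V → ℤ) (r : V)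
    (H : SimpleGraph W) (τ : W → ℤ) (r' : W) (t : ℕ) : Prop :=
  ∃ φ : (G.induce (ballSet G r t)) ≃g (H.induce (ballSet H r' t)),
    φ ⟨r, mem_ballSet_self G r t⟩ = ⟨r', mem_ballSet_self H r' t⟩ ∧
    ∀ x, τ (φ x).1 = σ x.1





/-! ### The planted bisection model -/

/-- `σ` is a balanced bipartition: the two class sizes differ by at most one. -/
def BalancedPart {n : ℕ} (σ : Fin n → Bool) : Prop :=
  (((Finset.univ.filter (fun v => σ v = true)).card : ℤ)
    - ((Finset.univ.filter (fun v => σ v = false)).card : ℤ)).natAbs ≤ 1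

/-- The number of balanced bipartitions of `Fin n`. -/
def Nbal (n : ℕ) : ℕ := (Finset.univ.filter (fun σ : Fin n → Bool => BalancedPart σ)).card

/-- The probability `p_{σ(v)σ(w)}` of the edge `{v,w}`, where `p₊ = 2d₊/n`, `p₋ = 2d₋/n`. -/
def pairProb (dp dm : ℝ) (n : ℕ) (σ : Fin n → Bool) (v w : Fin n) : ℝ :=
  if σ v = σ w then 2 * dp / n else 2 * dm / n

/-- The probability mass of an outcome `ω = (σ, g)` of the planted bisection model
`G(n, 2d₊/n, 2d₋/n)`: `σ` is a uniformly random balanced bipartition and, independently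
for each pair `v ≠ w`, the edge `{v,w}` is present with probability `p_{σ(v)σ(w)}`. -/
def pbMass (dp dm : ℝ) (n : ℕ) (ω : (Fin n → Bool) × (Fin n → Fin n → Bool)) : ℝ :=
  (if BalancedPart ω.1 ∧ (∀ v w, ω.2 v w = ω.2 w v) ∧ (∀ v, ω.2 v v = false)
    then ((Nbal n : ℝ))⁻¹ else 0) *
  ∏ p ∈ Finset.univ.filter (fun p : Fin n × Fin n => p.1 < p.2),
    (if ω.2 p.1 p.2 = true then pairProb dp dm n ω.1 p.1 p.2
      else 1 - pairProb dp dm n ω.1 p.1 p.2)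

/-- The probability of an event in the planted bisection model. -/
def pbPr (dp dm : ℝ) (n : ℕ) (A : (Fin n → Bool) × (Fin n → Fin n → Bool) → Prop) : ℝ :=
  ∑ ω ∈ Finset.univ.filter A, pbMass dp dm n ω

/-- Sign of a Boolean, as `±1`. -/
def sgnB (b : Bool) : ℤ := if b then 1 else -1

/-- The planted assignment `σ : [n] → {±1}` of an outcome. -/
def pbSigma {n : ℕ} (ω : (Fin n → Bool) × (Fin n → Fin n → Bool)) : Fin n → ℤ :=
  fun v => sgnB (ω.1 v)

/-- The graph of an outcome. -/
def pbGraph (n : ℕ) (g : Fin n → Fin n → Bool) : SimpleGraph (Fin n) :=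
  SimpleGraph.fromRel fun v w => g v w = true

/-- The minimum bisection width `bis(G)`: the least number of edges joining `S` and its
complement over all `S` with `||S| - |S̄|| ≤ 1`. -/
def bisWidth {n : ℕ} (G : SimpleGraph (Fin n)) : ℕ :=
  sInf { k | ∃ S : Finset (Fin n),
    ((S.card : ℤ) - ((n : ℤ) - (S.card : ℤ))).natAbs ≤ 1 ∧
    k = {p : Fin n × Fin n | G.Adj p.1 p.2 ∧ p.1 ∈ S ∧ p.2 ∉ S}.ncard }

/-! ### Finite rooted typed trees and the two-type Galton–Watson tree -/

/-- Finite rooted trees whose vertices carry a type in `ℤ` (used with types `±1`). -/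
inductive GWT : Type
  | node : ℤ → List GWT → GWT

instance : Inhabited GWT := ⟨.node 0 []⟩

/-- The type of the root. -/
def GWT.typeOf : GWT → ℤ
  | .node s _ => s

/-- The subtrees pending on the children of the root. -/
def GWT.childrenOf : GWT → List GWT
  | .node _ l => l

/-- Valid positions (vertices) of a tree, encoded as lists of child indices. -/
def GWT.valid : GWT → List ℕ → Prop
  | _, [] => True
  | T, i :: p => i < T.childrenOf.length ∧ GWT.valid (T.childrenOf.getD i default) p

/-- The type of the vertex at position `q`. -/
def GWT.typeAt : GWT → List ℕ → ℤ
  | T, [] => T.typeOf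
  | T, i :: p => GWT.typeAt (T.childrenOf.getD i default) p

/-- The tree as a simple graph on its set of positions. -/
def GWT.graph (T : GWT) : SimpleGraph { p : List ℕ // T.valid p } where
  Adj a b := (∃ i : ℕ, (b : List ℕ) = (a : List ℕ) ++ [i]) ∨
             (∃ i : ℕ, (a : List ℕ) = (b : List ℕ) ++ [i])
  symm := ⟨fun a b h => h.symm⟩
  loopless := ⟨fun a h => by
    rcases h with ⟨i, hi⟩ | ⟨i, hi⟩ <;>
      · have := congrArg List.length hi
        simp at this⟩

/-- The root of the tree. -/
def GWT.root (T : GWT) : { p : List ℕ // T.valid p } := ⟨[], trivial⟩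

/-- The type labelling of the vertices. -/
def GWT.lab (T : GWT) : { p : List ℕ // T.valid p } → ℤ := fun q => T.typeAt q.1

/-- The Warning Propagation message `μ_{r↑}(t)` sent by the root of a tree towards its
(imaginary) parent, when the messages are initialised with the types. -/
def GWT.rootMsg : ℕ → GWT → ℤ
  | 0, T => T.typeOf
  | t + 1, T => psiZ ((T.childrenOf.map (GWT.rootMsg t)).sum)

/-- The probability mass function of the depth-`t` truncation of the two-type Galton–Watson
tree with root type `s`, realised as a random *ordered* tree: the root spawns `Po(d₊ + d₋)`
children, each independently of type `s` with probability `d₊/(d₊+d₋)` and of type `-s`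
with probability `d₋/(d₊+d₋)`, and the subtrees pending on the children are independent
Galton–Watson trees truncated at depth `t-1`. -/
def ogwMass (dp dm : ℝ) : ℕ → ℤ → GWT → ℝ
  | 0, s, T => if T.typeOf = s ∧ T.childrenOf = [] then 1 else 0
  | t + 1, s, T =>
    if T.typeOf = s then
      Real.exp (-(dp + dm)) / (Nat.factorial T.childrenOf.length) *
        (T.childrenOf.map fun U => (if U.typeOf = s then dp else dm)
          * ogwMass dp dm t U.typeOf U).prod
    else 0


end

open scoped Pointwise

noncomputable section ZAux

/-- A nonnegative mass function supported in `s` with total mass 1. -/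
def NiceOn (a : ℤ → ℝ) (s : Finset ℤ) : Prop :=
  (∀ z, 0 ≤ a z) ∧ (∀ z ∉ s, a z = 0) ∧ HasSum a 1

lemma NiceOn.mono {a : ℤ → ℝ} {s s' : Finset ℤ} (h : NiceOn a s) (hs : s ⊆ s') :
    NiceOn a s' :=
  ⟨h.1, fun z hz => h.2.1 z (fun hzs => hz (hs hzs)), h.2.2⟩

lemma nice_of_prob {p : ℤ → ℝ} (hp : IsProbOn3 p) : NiceOn p (Finset.Icc (-1) 1) := by
  refine ⟨hp.1, fun z hz => hp.2.1 z ?_, ?_⟩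
  · simp only [Finset.mem_Icc] at hz
    intro hzs
    simp only [Set.mem_insert_iff, Set.mem_singleton_iff] at hzs
    omega
  · have hv : ∀ z ∉ ({-1, 0, 1} : Finset ℤ), p z = 0 := by
      intro z hz
      refine hp.2.1 z ?_
      intro hzs
      simp only [Set.mem_insert_iff, Set.mem_singleton_iff] at hzs
      simp only [Finset.mem_insert, Finset.mem_singleton] at hz
      tauto
    have h : HasSum p (∑ z ∈ ({-1, 0, 1} : Finset ℤ), p z) := hasSum_sum_of_ne_finset_zero hv
    have : ∑ z ∈ ({-1, 0, 1} : Finset ℤ), p z = 1 := by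
      rw [show ({-1, 0, 1} : Finset ℤ) = insert (-1) (insert 0 {1}) from rfl]
      rw [Finset.sum_insert (by decide), Finset.sum_insert (by decide),
        Finset.sum_singleton]
      linarith [hp.2.2]
    rw [this] at h
    exact h

lemma isprob_flip {p : ℤ → ℝ} (hp : IsProbOn3 p) : IsProbOn3 (flipM p) := by
  refine ⟨fun z => hp.1 (-z), fun z hz => hp.2.1 (-z) ?_, ?_⟩
  · intro hzs
    apply hz
    simp only [Set.mem_insert_iff, Set.mem_singleton_iff] at hzs ⊢
    omega
  · show p (-(-1)) + p (-0) + p (-1) = 1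
    rw [neg_neg, neg_zero]
    linarith [hp.2.2]

lemma convZ_eval {a b : ℤ → ℝ} {s : Finset ℤ} (ha : ∀ z ∉ s, a z = 0) (z : ℤ) :
    convZ a b z = ∑ w ∈ s, a w * b (z - w) := by
  refine tsum_eq_sum fun w hw => ?_
  rw [ha w hw, zero_mul]

lemma NiceOn.conv {a b : ℤ → ℝ} {s t : Finset ℤ} (ha : NiceOn a s) (hb : NiceOn b t) :
    NiceOn (convZ a b) (s + t) := by
  have heval : ∀ z, convZ a b z = ∑ w ∈ s, a w * b (z - w) := convZ_eval ha.2.1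
  have hvanish : ∀ z ∉ s + t, convZ a b z = 0 := by
    intro z hz
    rw [heval]
    refine Finset.sum_eq_zero fun w hw => ?_
    have hbz : b (z - w) = 0 := by
      refine hb.2.1 _ fun hmem => hz ?_
      exact Finset.mem_add.mpr ⟨w, hw, z - w, hmem, by ring⟩
    rw [hbz, mul_zero]
  refine ⟨fun z => ?_, hvanish, ?_⟩
  · rw [heval]
    exact Finset.sum_nonneg fun w _ => mul_nonneg (ha.1 w) (hb.1 _)
  · have hsum : ∑ z ∈ s + t, convZ a b z = 1 := by
      have hinner : ∀ w ∈ s, ∑ z ∈ s + t, b (z - w) = 1 := by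
        intro w hw
        have h1 : HasSum (fun z => b (z - w)) 1 := by
          have := (Equiv.subRight w).hasSum_iff (f := b) (a := 1)
          exact this.mpr hb.2.2
        have h2 : ∑' z : ℤ, b (z - w) = ∑ z ∈ s + t, b (z - w) := by
          refine tsum_eq_sum fun z hz => ?_
          refine hb.2.1 _ fun hmem => hz ?_
          exact Finset.mem_add.mpr ⟨w, hw, z - w, hmem, by ring⟩
        rw [← h2, h1.tsum_eq]
      calc ∑ z ∈ s + t, convZ a b z = ∑ z ∈ s + t, ∑ w ∈ s, a w * b (z - w) := by
            simp_rw [heval]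
        _ = ∑ w ∈ s, ∑ z ∈ s + t, a w * b (z - w) := Finset.sum_comm
        _ = ∑ w ∈ s, a w * ∑ z ∈ s + t, b (z - w) := by
            simp_rw [Finset.mul_sum]
        _ = ∑ w ∈ s, a w := by
            refine Finset.sum_congr rfl fun w hw => ?_
            rw [hinner w hw, mul_one]
        _ = 1 := by
            have : ∑' z, a z = ∑ z ∈ s, a z := tsum_eq_sum ha.2.1
            rw [← this, ha.2.2.tsum_eq]
    have : HasSum (convZ a b) (∑ z ∈ s + t, convZ a b z) := hasSum_sum_of_ne_finset_zero hvanish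
    rwa [hsum] at this

lemma nice_convPow {a : ℤ → ℝ} (ha : NiceOn a (Finset.Icc (-1) 1)) (k : ℕ) :
    NiceOn (convPow a k) (Finset.Icc (-(k : ℤ)) k) := by
  induction k with
  | zero =>
    refine ⟨fun z => ?_, fun z hz => ?_, ?_⟩
    · show (0:ℝ) ≤ if z = 0 then 1 else 0
      split <;> norm_num
    · show (if z = 0 then (1:ℝ) else 0) = 0
      simp only [Finset.mem_Icc] at hz
      rw [if_neg (by omega)]
    · exact hasSum_ite_eq 0 1
  | succ k ih =>
    have h := ih.conv ha
    refine h.mono ?_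
    intro z hz
    rw [Finset.mem_add] at hz
    obtain ⟨x, hx, y, hy, hxy⟩ := hz
    simp only [Finset.mem_Icc] at hx hy ⊢
    push_cast
    omega

end ZAux
noncomputable section ZAux2
open scoped Pointwise

/-- Tail mass `P(S_k ≤ t)` of the `k`-fold convolution. -/
def tailT (p : ℤ → ℝ) (k : ℕ) (t : ℤ) : ℝ := ∑' m : ℕ, convPow p k (t - (m : ℤ))

lemma summable_comp_inj {a : ℤ → ℝ} {s : Finset ℤ} (ha : NiceOn a s)
    {ι : ℕ → ℤ} (hι : Function.Injective ι) : Summable fun m => a (ι m) := by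
  refine summable_of_ne_finset_zero (s := s.preimage ι hι.injOn) fun m hm => ?_
  refine ha.2.1 _ fun hmem => hm ?_
  rwa [Finset.mem_preimage]

lemma tsum_comp_inj_le_one {a : ℤ → ℝ} {s : Finset ℤ} (ha : NiceOn a s)
    {ι : ℕ → ℤ} (hι : Function.Injective ι) : ∑' m : ℕ, a (ι m) ≤ 1 := by
  calc ∑' m : ℕ, a (ι m) ≤ ∑' z : ℤ, a z :=
        Summable.tsum_le_tsum_of_inj ι hι (fun c _ => ha.1 c) (fun m => le_rfl)
          (summable_comp_inj ha hι) ha.2.2.summable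
    _ = 1 := ha.2.2.tsum_eq

lemma inj_sub_cast (t : ℤ) : Function.Injective (fun m : ℕ => t - (m : ℤ)) := by
  intro a b h
  simp only at h
  omega

lemma tailT_nonneg {p : ℤ → ℝ} (hp : IsProbOn3 p) (k : ℕ) (t : ℤ) : 0 ≤ tailT p k t :=
  tsum_nonneg fun m => (nice_convPow (nice_of_prob hp) k).1 _

lemma tailT_le_one {p : ℤ → ℝ} (hp : IsProbOn3 p) (k : ℕ) (t : ℤ) : tailT p k t ≤ 1 :=
  tsum_comp_inj_le_one (nice_convPow (nice_of_prob hp) k) (inj_sub_cast t)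

lemma convZ_eval3 {p a : ℤ → ℝ} (hp : IsProbOn3 p) (z : ℤ) :
    convZ a p z = a (z + 1) * p (-1) + a z * p 0 + a (z - 1) * p 1 := by
  have h : convZ a p z = ∑ w ∈ ({z + 1, z, z - 1} : Finset ℤ), a w * p (z - w) := by
    refine tsum_eq_sum fun w hw => ?_
    have hzw : p (z - w) = 0 := by
      refine hp.2.1 _ fun hmem => ?_
      simp only [Set.mem_insert_iff, Set.mem_singleton_iff] at hmem
      simp only [Finset.mem_insert, Finset.mem_singleton] at hw
      omega
    rw [hzw, mul_zero]
  rw [h, Finset.sum_insert (by simp; omega), Finset.sum_insert (by simp; omega),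
    Finset.sum_singleton]
  rw [show z - (z + 1) = -1 by ring, show z - z = 0 by ring, show z - (z - 1) = 1 by ring]
  ring

lemma tailT_summable {p : ℤ → ℝ} (hp : IsProbOn3 p) (k : ℕ) (t : ℤ) :
    Summable fun m : ℕ => convPow p k (t - (m : ℤ)) :=
  summable_comp_inj (nice_convPow (nice_of_prob hp) k) (inj_sub_cast t)

lemma tailT_succ {p : ℤ → ℝ} (hp : IsProbOn3 p) (k : ℕ) (t : ℤ) :
    tailT p (k + 1) t
      = p (-1) * tailT p k (t + 1) + p 0 * tailT p k t + p 1 * tailT p k (t - 1) := by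
  unfold tailT
  have hpt : ∀ m : ℕ, convPow p (k + 1) (t - (m : ℤ))
      = convPow p k ((t + 1) - (m : ℤ)) * p (-1)
        + (convPow p k (t - (m : ℤ)) * p 0 + convPow p k ((t - 1) - (m : ℤ)) * p 1) := by
    intro m
    show convZ (convPow p k) p (t - (m : ℤ)) = _
    rw [convZ_eval3 hp]
    rw [show (t : ℤ) - m + 1 = (t + 1) - m by ring, show (t : ℤ) - m - 1 = (t - 1) - m by ring]
    ring
  rw [tsum_congr hpt]
  rw [Summable.tsum_add ((tailT_summable hp k (t+1)).mul_right _)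
    (((tailT_summable hp k t).mul_right _).add ((tailT_summable hp k (t-1)).mul_right _)),
    Summable.tsum_add ((tailT_summable hp k t).mul_right _) ((tailT_summable hp k (t-1)).mul_right _),
    tsum_mul_right, tsum_mul_right, tsum_mul_right]
  ring

lemma tailT_step {p : ℤ → ℝ} (hp : IsProbOn3 p) (k : ℕ) (t : ℤ) :
    tailT p k (t + 1) = convPow p k (t + 1) + tailT p k t := by
  unfold tailT
  rw [Summable.tsum_eq_zero_add (tailT_summable hp k (t+1))]
  congr 1
  · norm_num
  · refine tsum_congr fun m => ?_
    congr 1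
    push_cast
    ring

lemma tailT_mono {p : ℤ → ℝ} (hp : IsProbOn3 p) (k : ℕ) {t t' : ℤ} (h : t ≤ t') :
    tailT p k t ≤ tailT p k t' := by
  obtain ⟨n, hn⟩ : ∃ n : ℕ, t' = t + n := ⟨(t' - t).toNat, by omega⟩
  subst hn
  clear h
  induction n with
  | zero => simp
  | succ n ih =>
    have hstep : t + ((n : ℤ) + 1) = (t + n) + 1 := by ring
    rw [show ((n + 1 : ℕ) : ℤ) = (n : ℤ) + 1 by push_cast; ring, hstep, tailT_step hp k]
    have := (nice_convPow (nice_of_prob hp) k).1 (t + n + 1)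
    linarith

end ZAux2
noncomputable section ZAux3
open scoped Pointwise

lemma prob_facts {p : ℤ → ℝ} (hp : IsProbOn3 p) :
    0 ≤ p (-1) ∧ 0 ≤ p 0 ∧ 0 ≤ p 1 ∧ p 1 ≤ 1 ∧ p (-1) + p 0 = 1 - p 1 := by
  have h1 := hp.1 (-1); have h2 := hp.1 0; have h3 := hp.1 1; have h4 := hp.2.2
  exact ⟨h1, h2, h3, by linarith, by linarith⟩

lemma tailT_zero_neg {p : ℤ → ℝ} (t : ℤ) (ht : t < 0) : tailT p 0 t = 0 := by
  unfold tailT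
  have : ∀ m : ℕ, convPow p 0 (t - (m : ℤ)) = 0 := by
    intro m
    show (if t - (m : ℤ) = 0 then (1:ℝ) else 0) = 0
    rw [if_neg (by omega)]
  rw [tsum_congr this, tsum_zero]

lemma tailT_G {p : ℤ → ℝ} (hp : IsProbOn3 p) (k : ℕ) :
    tailT p k ((k : ℤ) - 1) ≤ (k : ℝ) * (1 - p 1) := by
  obtain ⟨h1, h2, h3, h4, h5⟩ := prob_facts hp
  induction k with
  | zero =>
    rw [tailT_zero_neg _ (by norm_num)]
    norm_num
  | succ k ih =>
    have hc : ((k + 1 : ℕ) : ℤ) - 1 = (k : ℤ) := by push_cast; ring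
    rw [hc, tailT_succ hp]
    have hT1 : tailT p k ((k : ℤ) + 1) ≤ 1 := tailT_le_one hp _ _
    have hT2 : tailT p k (k : ℤ) ≤ 1 := tailT_le_one hp _ _
    have hT3 : tailT p k ((k : ℤ) - 1) ≤ (k : ℝ) * (1 - p 1) := ih
    have hT1' := tailT_nonneg hp k ((k : ℤ) + 1)
    have hT2' := tailT_nonneg hp k (k : ℤ)
    have hT3' := tailT_nonneg hp k ((k : ℤ) - 1)
    have hkq : 0 ≤ (k : ℝ) * (1 - p 1) := mul_nonneg (Nat.cast_nonneg k) (by linarith)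
    have e1 : p (-1) * tailT p k ((k:ℤ)+1) ≤ p (-1) := by nlinarith
    have e2 : p 0 * tailT p k (k:ℤ) ≤ p 0 := by nlinarith
    have e3 : p 1 * tailT p k ((k:ℤ)-1) ≤ (k : ℝ) * (1 - p 1) := by nlinarith
    push_cast
    linarith

lemma tailT_H {p : ℤ → ℝ} (hp : IsProbOn3 p) (k : ℕ) :
    tailT p k ((k : ℤ) - 3) ≤ (k : ℝ) ^ 2 * (1 - p 1) ^ 2 := by
  obtain ⟨h1, h2, h3, h4, h5⟩ := prob_facts hp
  induction k with
  | zero =>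
    rw [tailT_zero_neg _ (by norm_num)]
    norm_num
  | succ k ih =>
    have hc : ((k + 1 : ℕ) : ℤ) - 3 = ((k : ℤ) - 2) := by push_cast; ring
    rw [hc, show (k:ℤ) - 2 = ((k:ℤ) - 3) + 1 by ring, tailT_succ hp]
    rw [show (k:ℤ) - 3 + 1 + 1 = (k:ℤ) - 1 by ring, show (k:ℤ) - 3 + 1 - 1 = (k:ℤ) - 3 by ring]
    have hG : tailT p k ((k : ℤ) - 1) ≤ (k : ℝ) * (1 - p 1) := tailT_G hp k
    have hG2 : tailT p k ((k : ℤ) - 3 + 1) ≤ tailT p k ((k:ℤ) - 1) :=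
      tailT_mono hp k (by omega)
    have hH : tailT p k ((k : ℤ) - 3) ≤ (k : ℝ)^2 * (1 - p 1)^2 := ih
    have hT1' := tailT_nonneg hp k ((k : ℤ) - 1)
    have hT2' := tailT_nonneg hp k ((k : ℤ) - 3 + 1)
    have hT3' := tailT_nonneg hp k ((k : ℤ) - 3)
    have hkq : 0 ≤ (k : ℝ) * (1 - p 1) := mul_nonneg (Nat.cast_nonneg k) (by linarith)
    have hkq2 : 0 ≤ (k : ℝ)^2 * (1 - p 1)^2 := by positivity
    have e1 : p (-1) * tailT p k ((k:ℤ)-1) ≤ p (-1) * ((k:ℝ) * (1 - p 1)) := by nlinarith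
    have e2 : p 0 * tailT p k ((k:ℤ)-3+1) ≤ p 0 * ((k:ℝ) * (1 - p 1)) := by nlinarith
    have e3 : p 1 * tailT p k ((k:ℤ)-3) ≤ (k : ℝ)^2 * (1 - p 1)^2 := by nlinarith
    have e4 : (p (-1) + p 0) * ((k:ℝ) * (1 - p 1)) ≤ (1 - p 1) * ((k:ℝ) * (1 - p 1)) := by
      nlinarith
    push_cast
    nlinarith

/-- Mass of `(-∞, 0]` under the convolution `ν_{k,l}` is at most `P(S_k ≤ l)`. -/
lemma conv_tail_le {p : ℤ → ℝ} (hp : IsProbOn3 p) (k l : ℕ) :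
    ∑' m : ℕ, convZ (convPow p k) (convPow (flipM p) l) (-(m : ℤ)) ≤ tailT p k (l : ℤ) := by
  have ha := nice_convPow (nice_of_prob hp) k
  have hb := nice_convPow (nice_of_prob (isprob_flip hp)) l
  set sa : Finset ℤ := Finset.Icc (-(k:ℤ)) k with hsa
  have heval : ∀ m : ℕ, convZ (convPow p k) (convPow (flipM p) l) (-(m:ℤ))
      = ∑ w ∈ sa, convPow p k w * convPow (flipM p) l (-(m:ℤ) - w) :=
    fun m => convZ_eval ha.2.1 _
  have hsummand : ∀ w : ℤ, Summable fun m : ℕ =>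
      convPow p k w * convPow (flipM p) l (-(m:ℤ) - w) := by
    intro w
    refine Summable.mul_left _ (summable_comp_inj hb (ι := fun m : ℕ => -(m:ℤ) - w) ?_)
    intro x y hxy
    simp only at hxy
    omega
  rw [tsum_congr heval, Summable.tsum_finsetSum (fun w _ => hsummand w)]
  simp_rw [tsum_mul_left]
  have hterm : ∀ w ∈ sa, convPow p k w * (∑' m : ℕ, convPow (flipM p) l (-(m:ℤ) - w))
      ≤ if w ≤ (l:ℤ) then convPow p k w else 0 := by
    intro w hw
    by_cases hwl : w ≤ (l:ℤ)
    · rw [if_pos hwl]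
      have h1 : ∑' m : ℕ, convPow (flipM p) l (-(m:ℤ) - w) ≤ 1 := by
        refine tsum_comp_inj_le_one hb (ι := fun m : ℕ => -(m:ℤ) - w) ?_
        intro x y hxy
        simp only at hxy
        omega
      exact mul_le_of_le_one_right (ha.1 w) h1 |>.trans_eq rfl
    · rw [if_neg hwl]
      have h0 : ∑' m : ℕ, convPow (flipM p) l (-(m:ℤ) - w) = 0 := by
        have : ∀ m : ℕ, convPow (flipM p) l (-(m:ℤ) - w) = 0 := by
          intro m
          refine hb.2.1 _ ?_
          simp only [Finset.mem_Icc]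
          omega
        rw [tsum_congr this, tsum_zero]
      rw [h0, mul_zero]
  calc ∑ w ∈ sa, convPow p k w * (∑' m : ℕ, convPow (flipM p) l (-(m:ℤ) - w))
      ≤ ∑ w ∈ sa, if w ≤ (l:ℤ) then convPow p k w else 0 := Finset.sum_le_sum hterm
    _ = ∑ w ∈ sa.filter (fun w => w ≤ (l:ℤ)), convPow p k w := by
        rw [Finset.sum_filter]
    _ ≤ tailT p k (l : ℤ) := by
        set F := sa.filter (fun w => w ≤ (l:ℤ)) with hF
        have hFle : ∀ w ∈ F, w ≤ (l : ℤ) := by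
          intro w hw
          exact (Finset.mem_filter.mp hw).2
        have himg : ∑ w ∈ F, convPow p k w
            = ∑ m ∈ F.image (fun w => ((l:ℤ) - w).toNat), convPow p k ((l:ℤ) - (m:ℤ)) := by
          rw [Finset.sum_image]
          · refine Finset.sum_congr rfl fun w hw => ?_
            congr 1
            have := hFle w hw
            omega
          · intro x hx y hy hxy
            have hx' := hFle x hx
            have hy' := hFle y hy
            simp only at hxy
            omega
        rw [himg]
        refine Summable.sum_le_tsum _ (fun m _ => (nice_convPow (nice_of_prob hp) k).1 _) ?_
        exact tailT_summable hp k _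

/-- Partition of unity: the masses of `[1, ∞)` and `(-∞, 0]` sum to 1. -/
lemma NiceOn.split {f : ℤ → ℝ} {s : Finset ℤ} (hf : NiceOn f s) :
    (∑' m : ℕ, f (1 + (m : ℤ))) + (∑' m : ℕ, f (-(m : ℤ))) = 1 := by
  have hι1 : Function.Injective (fun m : ℕ => 1 + (m:ℤ)) := by intro a b h; simp only at h; omega
  have hι2 : Function.Injective (fun m : ℕ => -(m:ℤ)) := by intro a b h; simp only at h; omega
  have hs1 : Summable (fun m : ℕ => f (1 + (m:ℤ))) := summable_comp_inj hf hι1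
  have hs2 : Summable (fun m : ℕ => f (-(m:ℤ))) := summable_comp_inj hf hι2
  set S : Set ℤ := {z : ℤ | 0 < z} with hS
  let e1 : ℕ ≃ S :=
    { toFun := fun m => ⟨1 + m, by simp [hS]; omega⟩
      invFun := fun z => (z.1 - 1).toNat
      left_inv := by intro m; simp
      right_inv := by
        intro z
        have hz := z.2
        simp only [hS, Set.mem_setOf_eq] at hz
        ext
        simp
        omega }
  let e2 : ℕ ≃ (Sᶜ : Set ℤ) :=
    { toFun := fun m => ⟨-m, by simp [hS]⟩
      invFun := fun z => (-z.1).toNat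
      left_inv := by intro m; simp
      right_inv := by
        intro z
        have hz := z.2
        simp only [hS, Set.mem_compl_iff, Set.mem_setOf_eq, not_lt] at hz
        ext
        simp
        omega }
  have h1 : HasSum (f ∘ (Subtype.val : S → ℤ)) (∑' m : ℕ, f (1 + (m:ℤ))) := by
    rw [← e1.hasSum_iff]
    have hcomp : ((f ∘ (Subtype.val : S → ℤ)) ∘ ⇑e1) = fun m : ℕ => f (1 + (m:ℤ)) := by
      funext m; rfl
    rw [hcomp]
    exact hs1.hasSum
  have h2 : HasSum (f ∘ (Subtype.val : (Sᶜ : Set ℤ) → ℤ)) (∑' m : ℕ, f (-(m:ℤ))) := by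
    rw [← e2.hasSum_iff]
    have hcomp : ((f ∘ (Subtype.val : (Sᶜ : Set ℤ) → ℤ)) ∘ ⇑e2) = fun m : ℕ => f (-(m:ℤ)) := by
      funext m; rfl
    rw [hcomp]
    exact hs2.hasSum
  have h3 : HasSum f ((∑' m : ℕ, f (1 + (m:ℤ))) + (∑' m : ℕ, f (-(m:ℤ)))) :=
    h1.add_isCompl isCompl_compl h2
  exact h3.unique hf.2.2

end ZAux3
noncomputable section ZAux4

lemma poisP_mgf (d s : ℝ) :
    HasSum (fun k : ℕ => poisP d k * Real.exp (s * k))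
      (Real.exp (d * Real.exp s - d)) := by
  have h1 : (fun k : ℕ => poisP d k * Real.exp (s * k))
      = fun k : ℕ => Real.exp (-d) * ((d * Real.exp s) ^ k / (Nat.factorial k)) := by
    funext k
    unfold poisP
    rw [mul_pow, show Real.exp (s * (k:ℝ)) = Real.exp s ^ k by
      rw [mul_comm]; exact Real.exp_nat_mul s k]
    ring
  have h2 : HasSum (fun k : ℕ => (d * Real.exp s) ^ k / (Nat.factorial k))
      (Real.exp (d * Real.exp s)) := by
    have hs := (Real.summable_pow_div_factorial (d * Real.exp s)).hasSum
    have he : Real.exp (d * Real.exp s) = ∑' n : ℕ, (d * Real.exp s) ^ n / (Nat.factorial n) := by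
      rw [Real.exp_eq_exp_ℝ, NormedSpace.exp_eq_tsum_div]
    rw [he]
    exact hs
  have h3 : Real.exp (-d) * Real.exp (d * Real.exp s) = Real.exp (d * Real.exp s - d) := by
    rw [← Real.exp_add]; ring_nf
  rw [h1, ← h3]
  exact h2.mul_left _

lemma poisP_hasSum_one (d : ℝ) : HasSum (poisP d) 1 := by
  have := poisP_mgf d 0
  simp only [zero_mul, Real.exp_zero, mul_one] at this
  simpa using this

lemma poisP_nonneg {d : ℝ} (hd : 0 ≤ d) (k : ℕ) : 0 ≤ poisP d k := by
  unfold poisP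
  positivity

lemma poisP_shift1 (d : ℝ) (k : ℕ) : poisP d (k + 1) * ((k : ℝ) + 1) = d * poisP d k := by
  unfold poisP
  rw [Nat.factorial_succ]
  have hk : (Nat.factorial k : ℝ) ≠ 0 := Nat.cast_ne_zero.mpr (Nat.factorial_ne_zero k)
  push_cast
  field_simp
  ring

lemma poisP_shift2 (d : ℝ) (k : ℕ) :
    poisP d (k + 2) * (((k : ℝ) + 2) * ((k : ℝ) + 1)) = d ^ 2 * poisP d k := by
  unfold poisP
  rw [show k + 2 = (k + 1) + 1 from rfl, Nat.factorial_succ, Nat.factorial_succ]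
  have hk : (Nat.factorial k : ℝ) ≠ 0 := Nat.cast_ne_zero.mpr (Nat.factorial_ne_zero k)
  push_cast
  field_simp
  ring

lemma hasSum_poisP_mul_id (d : ℝ) : HasSum (fun k : ℕ => poisP d k * (k : ℝ)) d := by
  have h : HasSum (fun n : ℕ => poisP d (n + 1) * ((n + 1 : ℕ) : ℝ)) (d * 1) := by
    have h2 : (fun n : ℕ => poisP d (n + 1) * ((n + 1 : ℕ) : ℝ))
        = fun n : ℕ => d * poisP d n := by
      funext n
      push_cast
      rw [poisP_shift1]
    rw [h2]
    exact (poisP_hasSum_one d).mul_left d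
  have := (hasSum_nat_add_iff (f := fun k : ℕ => poisP d k * (k : ℝ)) 1).mp h
  simpa using this

lemma hasSum_poisP_mul_sq (d : ℝ) :
    HasSum (fun k : ℕ => poisP d k * (k : ℝ) ^ 2) (d ^ 2 + d) := by
  have h2 : HasSum (fun k : ℕ => poisP d k * ((k : ℝ) * ((k : ℝ) - 1))) (d ^ 2) := by
    have h : HasSum (fun n : ℕ => poisP d (n + 2) * (((n + 2 : ℕ) : ℝ) * (((n + 2 : ℕ) : ℝ) - 1)))
        (d ^ 2 * 1) := by
      have he : (fun n : ℕ => poisP d (n + 2) * (((n + 2 : ℕ) : ℝ) * (((n + 2 : ℕ) : ℝ) - 1)))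
          = fun n : ℕ => d ^ 2 * poisP d n := by
        funext n
        push_cast
        rw [show ((n:ℝ) + 2) * ((n:ℝ) + 2 - 1) = ((n:ℝ) + 2) * ((n:ℝ) + 1) by ring]
        rw [poisP_shift2]
      rw [he]
      exact (poisP_hasSum_one d).mul_left _
    have := (hasSum_nat_add_iff
      (f := fun k : ℕ => poisP d k * ((k : ℝ) * ((k : ℝ) - 1))) 2).mp h
    simpa [Finset.sum_range_succ] using this
  have h3 := h2.add (hasSum_poisP_mul_id d)
  have h4 : (fun k : ℕ => poisP d k * ((k : ℝ) * ((k : ℝ) - 1)) + poisP d k * (k : ℝ))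
      = fun k : ℕ => poisP d k * (k : ℝ) ^ 2 := by
    funext k
    ring
  rwa [h4] at h3

end ZAux4
noncomputable section ZAux5
open scoped Pointwise
open ENNReal

lemma NiceOn.le_one {w : ℤ → ℝ} {s : Finset ℤ} (hw : NiceOn w s) (z : ℤ) : w z ≤ 1 := by
  have := Summable.le_tsum hw.2.2.summable z (fun j _ => hw.1 j)
  rwa [hw.2.2.tsum_eq] at this

lemma exchange {u v : ℕ → ℝ} (hu : HasSum u 1) (hv : HasSum v 1)
    (hun : ∀ k, 0 ≤ u k) (hvn : ∀ l, 0 ≤ v l)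
    {w : ℕ → ℕ → ℤ → ℝ} {s : ℕ → ℕ → Finset ℤ} (hw : ∀ k l, NiceOn (w k l) (s k l))
    {ι : ℕ → ℤ} (hι : Function.Injective ι) :
    ∑' m : ℕ, ENNReal.ofReal (∑' k : ℕ, ∑' l : ℕ, u k * v l * w k l (ι m))
      = ∑' k : ℕ, ∑' l : ℕ, ENNReal.ofReal (u k * v l * (∑' m : ℕ, w k l (ι m))) := by
  have hw0 : ∀ k l z, 0 ≤ w k l z := fun k l z => (hw k l).1 z
  have hw1 : ∀ k l z, w k l z ≤ 1 := fun k l z => (hw k l).le_one z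
  have huv : ∀ k l z, 0 ≤ u k * v l * w k l z :=
    fun k l z => mul_nonneg (mul_nonneg (hun k) (hvn l)) (hw0 k l z)
  have hSin : ∀ (k : ℕ) (z : ℤ), Summable fun l => u k * v l * w k l z := by
    intro k z
    refine Summable.of_nonneg_of_le (fun l => huv k l z) (fun l => ?_)
      ((hv.summable.mul_left (u k)))
    exact mul_le_of_le_one_right (mul_nonneg (hun k) (hvn l)) (hw1 k l z)
  have hinle : ∀ (k : ℕ) (z : ℤ), ∑' l : ℕ, u k * v l * w k l z ≤ u k := by
    intro k z
    calc ∑' l : ℕ, u k * v l * w k l z ≤ ∑' l : ℕ, u k * v l := by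
          refine Summable.tsum_le_tsum (fun l => ?_) (hSin k z) (hv.summable.mul_left (u k))
          exact mul_le_of_le_one_right (mul_nonneg (hun k) (hvn l)) (hw1 k l z)
      _ = u k := by rw [tsum_mul_left, hv.tsum_eq, mul_one]
  have hSout : ∀ z : ℤ, Summable fun k => ∑' l : ℕ, u k * v l * w k l z := by
    intro z
    refine Summable.of_nonneg_of_le (fun k => tsum_nonneg fun l => huv k l z)
      (fun k => hinle k z) hu.summable
  have step1 : ∀ z : ℤ, ENNReal.ofReal (∑' k : ℕ, ∑' l : ℕ, u k * v l * w k l z)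
      = ∑' k : ℕ, ∑' l : ℕ, ENNReal.ofReal (u k * v l * w k l z) := by
    intro z
    rw [ENNReal.ofReal_tsum_of_nonneg (fun k => tsum_nonneg fun l => huv k l z) (hSout z)]
    exact tsum_congr fun k =>
      ENNReal.ofReal_tsum_of_nonneg (fun l => huv k l z) (hSin k z)
  calc ∑' m : ℕ, ENNReal.ofReal (∑' k : ℕ, ∑' l : ℕ, u k * v l * w k l (ι m))
      = ∑' m : ℕ, ∑' k : ℕ, ∑' l : ℕ, ENNReal.ofReal (u k * v l * w k l (ι m)) :=
        tsum_congr fun m => step1 (ι m)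
    _ = ∑' k : ℕ, ∑' m : ℕ, ∑' l : ℕ, ENNReal.ofReal (u k * v l * w k l (ι m)) :=
        ENNReal.tsum_comm
    _ = ∑' k : ℕ, ∑' l : ℕ, ∑' m : ℕ, ENNReal.ofReal (u k * v l * w k l (ι m)) :=
        tsum_congr fun k => ENNReal.tsum_comm
    _ = ∑' k : ℕ, ∑' l : ℕ, ENNReal.ofReal (u k * v l * (∑' m : ℕ, w k l (ι m))) := by
        refine tsum_congr fun k => tsum_congr fun l => ?_
        have hsm : Summable fun m : ℕ => w k l (ι m) := summable_comp_inj (hw k l) hι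
        rw [ENNReal.ofReal_mul (mul_nonneg (hun k) (hvn l)),
          ENNReal.ofReal_tsum_of_nonneg (fun m => hw0 k l (ι m)) hsm,
          ← ENNReal.tsum_mul_left]
        exact tsum_congr fun m =>
          ENNReal.ofReal_mul (mul_nonneg (hun k) (hvn l))

end ZAux5
noncomputable section ZAux6

/-- The per-`(k,l)` bound on the lower-tail mass. -/
def bKL (q : ℝ) (k l : ℕ) : ℝ := (if k ≤ l + 2 then 1 else 0) + (k : ℝ) ^ 2 * q ^ 2

lemma exp_upper {x : ℝ} (hx : |x| ≤ 1) : Real.exp x ≤ 1 + x + x ^ 2 := by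
  have h := Real.exp_bound hx (n := 2) (by norm_num)
  have hsum : ∑ m ∈ Finset.range 2, x ^ m / (Nat.factorial m : ℝ) = 1 + x := by
    simp [Finset.sum_range_succ]
  rw [hsum] at h
  have h2 := (abs_le.mp h).2
  rw [sq_abs] at h2
  norm_num [Nat.factorial] at h2
  nlinarith [sq_nonneg x]

set_option maxHeartbeats 1000000 in
lemma chernoff_bound {dp dm : ℝ} (hdm : 0 < dm) (hlt : dm < dp) (hdp2 : 2 ≤ dp)
    (hgap : 16 * Real.sqrt (dp * Real.log dp) ≤ dp - dm) :
    ∑' k : ℕ, ∑' l : ℕ, poisP dp k * poisP dm l * (if k ≤ l + 2 then (1:ℝ) else 0)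
      ≤ 1 / 2 * (dp ^ 10)⁻¹ := by
  have hdp0 : 0 < dp := lt_trans hdm hlt
  set δ := dp - dm with hδdef
  set θ := δ / (4 * dp) with hθdef
  have hδ0 : 0 < δ := by simp [hδdef]; linarith
  have hθ0 : 0 < θ := by positivity
  have hθ4 : θ ≤ 1 / 4 := by
    rw [hθdef, div_le_iff₀ (by positivity)]
    simp [hδdef]; linarith
  have hPn : ∀ k, 0 ≤ poisP dp k := poisP_nonneg hdp0.le
  have hQn : ∀ l, 0 ≤ poisP dm l := poisP_nonneg hdm.le
  have Mp := poisP_mgf dp (-θ)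
  have Mm := poisP_mgf dm θ
  set E1 := Real.exp (dp * Real.exp (-θ) - dp) with hE1
  set E2 := Real.exp (dm * Real.exp θ - dm) with hE2
  set C : ℕ → ℝ := fun k => Real.exp (2 * θ) * (poisP dp k * Real.exp (-θ * k)) with hC
  -- pointwise bound
  have hpoint : ∀ k l : ℕ, poisP dp k * poisP dm l * (if k ≤ l + 2 then (1:ℝ) else 0)
      ≤ C k * (poisP dm l * Real.exp (θ * l)) := by
    intro k l
    by_cases hkl : k ≤ l + 2
    · rw [if_pos hkl]
      have hone : (1:ℝ) ≤ Real.exp (2 * θ) * Real.exp (-θ * k) * Real.exp (θ * l) := by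
        rw [← Real.exp_add, ← Real.exp_add]
        refine Real.one_le_exp ?_
        have hklr : (k : ℝ) ≤ (l : ℝ) + 2 := by exact_mod_cast hkl
        nlinarith [hθ0.le]
      calc poisP dp k * poisP dm l * 1 = (poisP dp k * poisP dm l) * 1 := by ring
        _ ≤ (poisP dp k * poisP dm l)
            * (Real.exp (2 * θ) * Real.exp (-θ * k) * Real.exp (θ * l)) :=
            mul_le_mul_of_nonneg_left hone (mul_nonneg (hPn k) (hQn l))
        _ = C k * (poisP dm l * Real.exp (θ * l)) := by rw [hC]; ring
    · rw [if_neg hkl, mul_zero]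
      have : 0 ≤ C k * (poisP dm l * Real.exp (θ * l)) := by
        refine mul_nonneg ?_ (mul_nonneg (hQn l) (Real.exp_nonneg _))
        exact mul_nonneg (Real.exp_nonneg _) (mul_nonneg (hPn k) (Real.exp_nonneg _))
      exact this
  have hLsum : ∀ k, Summable fun l => poisP dp k * poisP dm l * (if k ≤ l + 2 then (1:ℝ) else 0) := by
    intro k
    refine Summable.of_nonneg_of_le (fun l => ?_) (fun l => ?_)
      ((poisP_hasSum_one dm).summable.mul_left (poisP dp k))
    · refine mul_nonneg (mul_nonneg (hPn k) (hQn l)) ?_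
      split <;> norm_num
    · refine mul_le_of_le_one_right (mul_nonneg (hPn k) (hQn l)) ?_
      split <;> norm_num
  have hRsum : ∀ k, Summable fun l => C k * (poisP dm l * Real.exp (θ * l)) :=
    fun k => Mm.summable.mul_left (C k)
  have hinner : ∀ k, ∑' l : ℕ, poisP dp k * poisP dm l * (if k ≤ l + 2 then (1:ℝ) else 0)
      ≤ C k * E2 := by
    intro k
    calc ∑' l : ℕ, poisP dp k * poisP dm l * (if k ≤ l + 2 then (1:ℝ) else 0)
        ≤ ∑' l : ℕ, C k * (poisP dm l * Real.exp (θ * l)) :=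
          Summable.tsum_le_tsum (hpoint k) (hLsum k) (hRsum k)
      _ = C k * E2 := by rw [tsum_mul_left, Mm.tsum_eq]
  have hCnn : ∀ k, 0 ≤ C k :=
    fun k => mul_nonneg (Real.exp_nonneg _) (mul_nonneg (hPn k) (Real.exp_nonneg _))
  have hC2sum : Summable fun k => C k * E2 := by
    have : (fun k => C k * E2)
        = fun k => (Real.exp (2 * θ) * E2) * (poisP dp k * Real.exp (-θ * k)) := by
      funext k; rw [hC]; ring
    rw [this]
    exact Mp.summable.mul_left _
  have houtsum : Summable fun k => ∑' l : ℕ,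
      poisP dp k * poisP dm l * (if k ≤ l + 2 then (1:ℝ) else 0) := by
    refine Summable.of_nonneg_of_le (fun k => tsum_nonneg fun l => ?_) (fun k => hinner k) hC2sum
    refine mul_nonneg (mul_nonneg (hPn k) (hQn l)) ?_
    split <;> norm_num
  have htot : ∑' k : ℕ, ∑' l : ℕ, poisP dp k * poisP dm l * (if k ≤ l + 2 then (1:ℝ) else 0)
      ≤ Real.exp (2 * θ) * E2 * E1 := by
    calc ∑' k : ℕ, ∑' l : ℕ, poisP dp k * poisP dm l * (if k ≤ l + 2 then (1:ℝ) else 0)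
        ≤ ∑' k : ℕ, C k * E2 := Summable.tsum_le_tsum hinner houtsum hC2sum
      _ = Real.exp (2 * θ) * E2 * E1 := by
          have : (fun k => C k * E2)
              = fun k => (Real.exp (2 * θ) * E2) * (poisP dp k * Real.exp (-θ * k)) := by
            funext k; rw [hC]; ring
          rw [this, tsum_mul_left, Mp.tsum_eq]
  -- numeric bound on the exponential
  have hlog : 0 ≤ Real.log dp := Real.log_nonneg (by linarith)
  have hsq : Real.sqrt (dp * Real.log dp) ^ 2 = dp * Real.log dp :=
    Real.sq_sqrt (by positivity)
  have hδ2 : 256 * (dp * Real.log dp) ≤ δ ^ 2 := by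
    nlinarith [Real.sqrt_nonneg (dp * Real.log dp)]
  have hθ1 : |θ| ≤ 1 := by rw [abs_of_pos hθ0]; linarith
  have hθ1' : |(-θ)| ≤ 1 := by rw [abs_neg]; exact hθ1
  have hub1 : Real.exp (-θ) ≤ 1 - θ + θ ^ 2 := by
    have := exp_upper hθ1'
    nlinarith [this]
  have hub2 : Real.exp θ ≤ 1 + θ + θ ^ 2 := exp_upper hθ1
  have hkey1 : θ * δ = δ ^ 2 / (4 * dp) := by
    rw [hθdef]; field_simp
  have hkey2 : 2 * dp * θ ^ 2 = δ ^ 2 / (8 * dp) := by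
    rw [hθdef]; field_simp; ring
  have hdiv : 32 * Real.log dp ≤ δ ^ 2 / (8 * dp) := by
    rw [le_div_iff₀ (by positivity)]
    nlinarith
  have hexponent : 2 * θ + (dm * Real.exp θ - dm) + (dp * Real.exp (-θ) - dp)
      ≤ 1 / 2 - 32 * Real.log dp := by
    have e1 : dm * Real.exp θ - dm ≤ dm * θ + dm * θ ^ 2 := by
      have h := mul_le_mul_of_nonneg_left hub2 hdm.le
      have hx : dm * (1 + θ + θ ^ 2) = dm + dm * θ + dm * θ ^ 2 := by ring
      linarith
    have e2 : dp * Real.exp (-θ) - dp ≤ -(dp * θ) + dp * θ ^ 2 := by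
      have h := mul_le_mul_of_nonneg_left hub1 hdp0.le
      have hx : dp * (1 - θ + θ ^ 2) = dp - dp * θ + dp * θ ^ 2 := by ring
      linarith
    have e3 : dm * θ - dp * θ = -(θ * δ) := by rw [hδdef]; ring
    have e4 : dm * θ ^ 2 + dp * θ ^ 2 ≤ 2 * dp * θ ^ 2 := by
      have h := mul_le_mul_of_nonneg_right hlt.le (sq_nonneg θ)
      nlinarith
    have e5 : -(θ * δ) + 2 * dp * θ ^ 2 = -(δ ^ 2 / (8 * dp)) := by
      rw [hkey1, hkey2]; field_simp; ring
    linarith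
  have hE : Real.exp (2 * θ) * E2 * E1
      = Real.exp (2 * θ + (dm * Real.exp θ - dm) + (dp * Real.exp (-θ) - dp)) := by
    rw [hE1, hE2, ← Real.exp_add, ← Real.exp_add]
  have hfin : Real.exp (2 * θ) * E2 * E1 ≤ 1 / 2 * (dp ^ 10)⁻¹ := by
    rw [hE]
    have h1 : Real.exp (2 * θ + (dm * Real.exp θ - dm) + (dp * Real.exp (-θ) - dp))
        ≤ Real.exp (1 / 2 - 32 * Real.log dp) := Real.exp_le_exp.mpr hexponent
    have h2 : Real.exp (1 / 2 - 32 * Real.log dp) = Real.exp (1 / 2) / dp ^ (32:ℕ) := by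
      rw [Real.exp_sub]
      congr 1
      rw [show (32 : ℝ) * Real.log dp = ((32:ℕ) : ℝ) * Real.log dp by norm_num,
        Real.exp_nat_mul, Real.exp_log hdp0]
    have hex : Real.exp (1 / 2) ≤ 3 := by
      have := Real.exp_one_lt_d9
      have h3 : Real.exp (1/2 : ℝ) ≤ Real.exp 1 := Real.exp_le_exp.mpr (by norm_num)
      linarith
    have h22 : (6 : ℝ) ≤ dp ^ (22:ℕ) := by
      calc (6:ℝ) ≤ 2 ^ (22:ℕ) := by norm_num
        _ ≤ dp ^ (22:ℕ) := pow_le_pow_left₀ (by norm_num) hdp2 22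
    have hpow10 : (0:ℝ) < dp ^ (10:ℕ) := by positivity
    have h4 : Real.exp (1 / 2) / dp ^ (32:ℕ) ≤ 1 / 2 * (dp ^ 10)⁻¹ := by
      rw [inv_eq_one_div, div_le_iff₀ (by positivity), mul_assoc]
      have hid : (1:ℝ) / 2 * (1 / dp ^ 10 * dp ^ (32:ℕ)) = dp ^ (22:ℕ) / 2 := by
        field_simp
      rw [hid]
      linarith
    linarith
  linarith [htot, hfin]

lemma sq_term_bound {dp dm q : ℝ} (hdm : 0 < dm) (hlt : dm < dp) (hdp2 : 2 ≤ dp)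
    (hq0 : 0 ≤ q) (hqe : q ≤ (dp ^ 10)⁻¹) :
    ∑' k : ℕ, ∑' l : ℕ, poisP dp k * poisP dm l * ((k : ℝ) ^ 2 * q ^ 2)
      ≤ 1 / 2 * (dp ^ 10)⁻¹ := by
  have hdp0 : 0 < dp := lt_trans hdm hlt
  have hinner : ∀ k : ℕ, ∑' l : ℕ, poisP dp k * poisP dm l * ((k : ℝ) ^ 2 * q ^ 2)
      = poisP dp k * ((k : ℝ) ^ 2 * q ^ 2) := by
    intro k
    have : (fun l : ℕ => poisP dp k * poisP dm l * ((k : ℝ) ^ 2 * q ^ 2))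
        = fun l : ℕ => (poisP dp k * ((k : ℝ) ^ 2 * q ^ 2)) * poisP dm l := by
      funext l; ring
    rw [this, tsum_mul_left, (poisP_hasSum_one dm).tsum_eq, mul_one]
  have houter : ∑' k : ℕ, poisP dp k * ((k : ℝ) ^ 2 * q ^ 2) = (dp ^ 2 + dp) * q ^ 2 := by
    have : (fun k : ℕ => poisP dp k * ((k : ℝ) ^ 2 * q ^ 2))
        = fun k : ℕ => (poisP dp k * (k : ℝ) ^ 2) * q ^ 2 := by
      funext k; ring
    rw [this, tsum_mul_right, (hasSum_poisP_mul_sq dp).tsum_eq]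
  rw [tsum_congr hinner, houter]
  have h1 : (dp ^ 2 + dp) * q ^ 2 ≤ 2 * dp ^ 2 * ((dp ^ 10)⁻¹) ^ 2 := by
    have hq2 : q ^ 2 ≤ ((dp ^ 10)⁻¹) ^ 2 := by nlinarith
    have hA : dp ^ 2 + dp ≤ 2 * dp ^ 2 := by nlinarith
    calc (dp ^ 2 + dp) * q ^ 2 ≤ 2 * dp ^ 2 * q ^ 2 :=
          mul_le_mul_of_nonneg_right hA (sq_nonneg q)
      _ ≤ 2 * dp ^ 2 * ((dp ^ 10)⁻¹) ^ 2 :=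
          mul_le_mul_of_nonneg_left hq2 (by positivity)
  have h2 : 2 * dp ^ 2 * ((dp ^ 10)⁻¹) ^ 2 ≤ 1 / 2 * (dp ^ 10)⁻¹ := by
    have hid : 2 * dp ^ 2 * ((dp ^ 10)⁻¹) ^ 2 = 2 / dp ^ (18:ℕ) := by
      field_simp
    have hid2 : (1:ℝ) / 2 * (dp ^ 10)⁻¹ = 1 / (2 * dp ^ (10:ℕ)) := by
      rw [inv_eq_one_div]
      ring
    rw [hid, hid2, div_le_div_iff₀ (by positivity) (by positivity)]
    have h8 : (4 : ℝ) ≤ dp ^ (8:ℕ) := by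
      calc (4:ℝ) ≤ 2 ^ (8:ℕ) := by norm_num
        _ ≤ dp ^ (8:ℕ) := pow_le_pow_left₀ (by norm_num) hdp2 8
    have hexp : dp ^ (18:ℕ) = dp ^ (8:ℕ) * dp ^ (10:ℕ) := by ring
    nlinarith [pow_pos hdp0 10]
  linarith

lemma summable_PQchi {dp dm : ℝ} (hdp0 : 0 < dp) (hdm : 0 < dm) (k : ℕ) :
    Summable fun l => poisP dp k * poisP dm l * (if k ≤ l + 2 then (1:ℝ) else 0) := by
  refine Summable.of_nonneg_of_le (fun l => ?_) (fun l => ?_)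
    ((poisP_hasSum_one dm).summable.mul_left (poisP dp k))
  · refine mul_nonneg (mul_nonneg (poisP_nonneg hdp0.le k) (poisP_nonneg hdm.le l)) ?_
    split <;> norm_num
  · refine mul_le_of_le_one_right
      (mul_nonneg (poisP_nonneg hdp0.le k) (poisP_nonneg hdm.le l)) ?_
    split <;> norm_num

lemma Rsum_facts {dp dm q : ℝ} (hdm : 0 < dm) (hlt : dm < dp) (hdp2 : 2 ≤ dp)
    (hq0 : 0 ≤ q) (hqe : q ≤ (dp ^ 10)⁻¹)
    (hgap : 16 * Real.sqrt (dp * Real.log dp) ≤ dp - dm) :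
    (∀ k, Summable fun l => poisP dp k * poisP dm l * bKL q k l) ∧
    (Summable fun k => ∑' l : ℕ, poisP dp k * poisP dm l * bKL q k l) ∧
    ∑' k : ℕ, ∑' l : ℕ, poisP dp k * poisP dm l * bKL q k l ≤ (dp ^ 10)⁻¹ := by
  have hdp0 : 0 < dp := lt_trans hdm hlt
  have hPn : ∀ k, 0 ≤ poisP dp k := poisP_nonneg hdp0.le
  have hQn : ∀ l, 0 ≤ poisP dm l := poisP_nonneg hdm.le
  have hsplit : ∀ k l : ℕ, poisP dp k * poisP dm l * bKL q k l
      = poisP dp k * poisP dm l * (if k ≤ l + 2 then (1:ℝ) else 0)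
        + poisP dp k * poisP dm l * ((k : ℝ) ^ 2 * q ^ 2) := by
    intro k l
    unfold bKL
    ring
  have hsum2 : ∀ k, Summable fun l => poisP dp k * poisP dm l * ((k : ℝ) ^ 2 * q ^ 2) := by
    intro k
    have : (fun l : ℕ => poisP dp k * poisP dm l * ((k : ℝ) ^ 2 * q ^ 2))
        = fun l : ℕ => (poisP dp k * ((k : ℝ) ^ 2 * q ^ 2)) * poisP dm l := by
      funext l; ring
    rw [this]
    exact (poisP_hasSum_one dm).summable.mul_left _
  have hsumL : ∀ k, Summable fun l => poisP dp k * poisP dm l * bKL q k l := by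
    intro k
    have := (summable_PQchi hdp0 hdm k).add (hsum2 k)
    refine this.congr fun l => (hsplit k l).symm
  have hinner : ∀ k, ∑' l : ℕ, poisP dp k * poisP dm l * bKL q k l
      = (∑' l : ℕ, poisP dp k * poisP dm l * (if k ≤ l + 2 then (1:ℝ) else 0))
        + ∑' l : ℕ, poisP dp k * poisP dm l * ((k : ℝ) ^ 2 * q ^ 2) := by
    intro k
    rw [tsum_congr (hsplit k)]
    exact Summable.tsum_add (summable_PQchi hdp0 hdm k) (hsum2 k)
  have hchi_le : ∀ k, ∑' l : ℕ, poisP dp k * poisP dm l * (if k ≤ l + 2 then (1:ℝ) else 0)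
      ≤ poisP dp k := by
    intro k
    calc ∑' l : ℕ, poisP dp k * poisP dm l * (if k ≤ l + 2 then (1:ℝ) else 0)
        ≤ ∑' l : ℕ, poisP dp k * poisP dm l := by
          refine Summable.tsum_le_tsum (fun l => ?_) (summable_PQchi hdp0 hdm k)
            ((poisP_hasSum_one dm).summable.mul_left _)
          refine mul_le_of_le_one_right (mul_nonneg (hPn k) (hQn l)) ?_
          split <;> norm_num
      _ = poisP dp k := by rw [tsum_mul_left, (poisP_hasSum_one dm).tsum_eq, mul_one]
  have hchi_nonneg : ∀ k, 0 ≤ ∑' l : ℕ, poisP dp k * poisP dm l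
      * (if k ≤ l + 2 then (1:ℝ) else 0) := by
    intro k
    refine tsum_nonneg fun l => ?_
    refine mul_nonneg (mul_nonneg (hPn k) (hQn l)) ?_
    split <;> norm_num
  have hsumchi : Summable fun k => ∑' l : ℕ, poisP dp k * poisP dm l
      * (if k ≤ l + 2 then (1:ℝ) else 0) :=
    Summable.of_nonneg_of_le hchi_nonneg hchi_le (poisP_hasSum_one dp).summable
  have hsum2' : Summable fun k => ∑' l : ℕ, poisP dp k * poisP dm l * ((k : ℝ) ^ 2 * q ^ 2) := by
    have heq : ∀ k : ℕ, ∑' l : ℕ, poisP dp k * poisP dm l * ((k : ℝ) ^ 2 * q ^ 2)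
        = (poisP dp k * (k:ℝ) ^ 2) * q ^ 2 := by
      intro k
      have : (fun l : ℕ => poisP dp k * poisP dm l * ((k : ℝ) ^ 2 * q ^ 2))
          = fun l : ℕ => (poisP dp k * ((k : ℝ) ^ 2 * q ^ 2)) * poisP dm l := by
        funext l; ring
      rw [this, tsum_mul_left, (poisP_hasSum_one dm).tsum_eq, mul_one]
      ring
    refine Summable.congr ((hasSum_poisP_mul_sq dp).summable.mul_right (q ^ 2)) fun k => ?_
    rw [heq k]
  have hsumK : Summable fun k => ∑' l : ℕ, poisP dp k * poisP dm l * bKL q k l := by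
    refine Summable.congr (hsumchi.add hsum2') fun k => (hinner k).symm
  refine ⟨hsumL, hsumK, ?_⟩
  rw [tsum_congr hinner, Summable.tsum_add hsumchi hsum2']
  have hc := chernoff_bound hdm hlt hdp2 hgap
  have hs := sq_term_bound hdm hlt hdp2 hq0 hqe
  linarith

end ZAux6
/-- Display (12) in the proof of Lemma 4.1: for skewed `p`, `P(Z_p < 1) ≤ d₊⁻¹⁰`;
equivalently `P(ψ(Z_p) = 1) ≥ 1 - d₊⁻¹⁰`. -/
theorem Z_rarely_small :
    ∃ c : ℝ, 0 < c ∧ ∃ D : ℝ, ∀ dp dm : ℝ,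
    0 < dm → dm < dp → D ≤ dp → c * Real.sqrt (dp * Real.log dp) ≤ dp - dm →
    ∀ p : ℤ → ℝ, IsProbOn3 p → Skewed dp p →
      (∑' m : ℕ, Zdist dp dm p (-(m : ℤ))) ≤ (dp ^ 10)⁻¹ ∧
      1 - (dp ^ 10)⁻¹ ≤ Twp dp dm p 1 := by
  refine ⟨16, by norm_num, 2, ?_⟩
  intro dp dm hdm hlt hD hgap p hp hsk
  have hdp0 : 0 < dp := lt_trans hdm hlt
  have hdp2 : 2 ≤ dp := hD
  obtain ⟨hp1, hp2, hp3, hp4, hp5⟩ := prob_facts hp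
  have hq0 : 0 ≤ 1 - p 1 := by linarith
  have hqe : 1 - p 1 ≤ (dp ^ 10)⁻¹ := by
    have := hsk
    unfold Skewed at this
    linarith
  obtain ⟨hsumL, hsumK, hRle⟩ := Rsum_facts hdm hlt hdp2 hq0 hqe hgap
  have hνnice : ∀ k l : ℕ, NiceOn (convZ (convPow p k) (convPow (flipM p) l))
      (Finset.Icc (-(k:ℤ)) k + Finset.Icc (-(l:ℤ)) l) :=
    fun k l => (nice_convPow (nice_of_prob hp) k).conv
      (nice_convPow (nice_of_prob (isprob_flip hp)) l)
  have hι1 : Function.Injective (fun m : ℕ => -(m:ℤ)) := by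
    intro a b h; simp only at h; omega
  have hι2 : Function.Injective (fun m : ℕ => 1 + (m:ℤ)) := by
    intro a b h; simp only at h; omega
  have hPn : ∀ k, 0 ≤ poisP dp k := poisP_nonneg hdp0.le
  have hQn : ∀ l, 0 ≤ poisP dm l := poisP_nonneg hdm.le
  have hPone := poisP_hasSum_one dp
  have hQone := poisP_hasSum_one dm
  have hB0 : ∀ k l : ℕ, 0 ≤ ∑' m : ℕ, convZ (convPow p k) (convPow (flipM p) l) (-(m:ℤ)) :=
    fun k l => tsum_nonneg fun m => (hνnice k l).1 _
  have hB1 : ∀ k l : ℕ, (∑' m : ℕ, convZ (convPow p k) (convPow (flipM p) l) (-(m:ℤ))) ≤ 1 :=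
    fun k l => tsum_comp_inj_le_one (hνnice k l) hι1
  have hBb : ∀ k l : ℕ, (∑' m : ℕ, convZ (convPow p k) (convPow (flipM p) l) (-(m:ℤ)))
      ≤ bKL (1 - p 1) k l := by
    intro k l
    by_cases hkl : k ≤ l + 2
    · unfold bKL
      rw [if_pos hkl]
      have h1 := hB1 k l
      have h2 : 0 ≤ (k:ℝ)^2 * (1 - p 1)^2 := by positivity
      linarith
    · unfold bKL
      rw [if_neg hkl]
      have h1 := conv_tail_le hp k l
      have h2 : tailT p k (l:ℤ) ≤ tailT p k ((k:ℤ) - 3) := tailT_mono hp k (by omega)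
      have h3 := tailT_H hp k
      linarith
  have hAB : ∀ k l : ℕ,
      (∑' m : ℕ, convZ (convPow p k) (convPow (flipM p) l) (1 + (m:ℤ)))
        + (∑' m : ℕ, convZ (convPow p k) (convPow (flipM p) l) (-(m:ℤ))) = 1 :=
    fun k l => (hνnice k l).split
  have hZnn : ∀ z, 0 ≤ Zdist dp dm p z := by
    intro z
    refine tsum_nonneg fun k => tsum_nonneg fun l => ?_
    exact mul_nonneg (mul_nonneg (hPn k) (hQn l)) ((hνnice k l).1 z)
  have hex1 : ∑' m : ℕ, ENNReal.ofReal (Zdist dp dm p (-(m:ℤ)))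
      = ∑' k : ℕ, ∑' l : ℕ, ENNReal.ofReal (poisP dp k * poisP dm l
          * (∑' m : ℕ, convZ (convPow p k) (convPow (flipM p) l) (-(m:ℤ)))) :=
    exchange hPone hQone hPn hQn hνnice hι1
  have hex2 : ∑' m : ℕ, ENNReal.ofReal (Zdist dp dm p (1 + (m:ℤ)))
      = ∑' k : ℕ, ∑' l : ℕ, ENNReal.ofReal (poisP dp k * poisP dm l
          * (∑' m : ℕ, convZ (convPow p k) (convPow (flipM p) l) (1 + (m:ℤ)))) :=
    exchange hPone hQone hPn hQn hνnice hι2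
  have hbnn : ∀ k l : ℕ, 0 ≤ poisP dp k * poisP dm l * bKL (1 - p 1) k l := by
    intro k l
    refine mul_nonneg (mul_nonneg (hPn k) (hQn l)) ?_
    unfold bKL
    have : 0 ≤ (k:ℝ)^2 * (1 - p 1)^2 := by positivity
    split <;> linarith
  have hXle : (∑' k : ℕ, ∑' l : ℕ, ENNReal.ofReal (poisP dp k * poisP dm l
      * (∑' m : ℕ, convZ (convPow p k) (convPow (flipM p) l) (-(m:ℤ)))))
      ≤ ENNReal.ofReal ((dp ^ 10)⁻¹) := by
    calc (∑' k : ℕ, ∑' l : ℕ, ENNReal.ofReal (poisP dp k * poisP dm l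
        * (∑' m : ℕ, convZ (convPow p k) (convPow (flipM p) l) (-(m:ℤ)))))
        ≤ ∑' k : ℕ, ∑' l : ℕ, ENNReal.ofReal (poisP dp k * poisP dm l * bKL (1 - p 1) k l) := by
          refine ENNReal.tsum_le_tsum fun k => ENNReal.tsum_le_tsum fun l => ?_
          exact ENNReal.ofReal_le_ofReal
            (mul_le_mul_of_nonneg_left (hBb k l) (mul_nonneg (hPn k) (hQn l)))
      _ = ENNReal.ofReal (∑' k : ℕ, ∑' l : ℕ, poisP dp k * poisP dm l * bKL (1 - p 1) k l) := by
          rw [ENNReal.ofReal_tsum_of_nonneg (fun k => tsum_nonneg fun l => hbnn k l) hsumK]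
          exact tsum_congr fun k => (ENNReal.ofReal_tsum_of_nonneg (hbnn k) (hsumL k)).symm
      _ ≤ ENNReal.ofReal ((dp ^ 10)⁻¹) := ENNReal.ofReal_le_ofReal hRle
  constructor
  · by_cases hs : Summable (fun m : ℕ => Zdist dp dm p (-(m:ℤ)))
    · rw [← ENNReal.ofReal_le_ofReal_iff (by positivity)]
      rw [ENNReal.ofReal_tsum_of_nonneg (fun m => hZnn _) hs, hex1]
      exact hXle
    · rw [tsum_eq_zero_of_not_summable hs]
      positivity
  · have hTwp : Twp dp dm p 1 = ∑' m : ℕ, Zdist dp dm p (1 + (m:ℤ)) := by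
      simp [Twp]
    have hPQ1 : (∑' k : ℕ, ∑' l : ℕ, ENNReal.ofReal (poisP dp k * poisP dm l)) = 1 := by
      have hin : ∀ k : ℕ, (∑' l : ℕ, ENNReal.ofReal (poisP dp k * poisP dm l))
          = ENNReal.ofReal (poisP dp k) := by
        intro k
        calc (∑' l : ℕ, ENNReal.ofReal (poisP dp k * poisP dm l))
            = ∑' l : ℕ, ENNReal.ofReal (poisP dp k) * ENNReal.ofReal (poisP dm l) :=
              tsum_congr fun l => ENNReal.ofReal_mul (hPn k)
          _ = ENNReal.ofReal (poisP dp k) * ∑' l : ℕ, ENNReal.ofReal (poisP dm l) :=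
              ENNReal.tsum_mul_left
          _ = ENNReal.ofReal (poisP dp k) * ENNReal.ofReal (∑' l : ℕ, poisP dm l) := by
              rw [ENNReal.ofReal_tsum_of_nonneg hQn hQone.summable]
          _ = ENNReal.ofReal (poisP dp k) := by
              rw [hQone.tsum_eq, ENNReal.ofReal_one, mul_one]
      rw [tsum_congr hin, ← ENNReal.ofReal_tsum_of_nonneg hPn hPone.summable,
        hPone.tsum_eq, ENNReal.ofReal_one]
    have hXX : (∑' k : ℕ, ∑' l : ℕ, ENNReal.ofReal (poisP dp k * poisP dm l
          * (∑' m : ℕ, convZ (convPow p k) (convPow (flipM p) l) (1 + (m:ℤ)))))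
        + (∑' k : ℕ, ∑' l : ℕ, ENNReal.ofReal (poisP dp k * poisP dm l
          * (∑' m : ℕ, convZ (convPow p k) (convPow (flipM p) l) (-(m:ℤ))))) = 1 := by
      have hptw : ∀ k l : ℕ,
          ENNReal.ofReal (poisP dp k * poisP dm l
            * (∑' m : ℕ, convZ (convPow p k) (convPow (flipM p) l) (1 + (m:ℤ))))
          + ENNReal.ofReal (poisP dp k * poisP dm l
            * (∑' m : ℕ, convZ (convPow p k) (convPow (flipM p) l) (-(m:ℤ))))
          = ENNReal.ofReal (poisP dp k * poisP dm l) := by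
        intro k l
        rw [← ENNReal.ofReal_add
          (mul_nonneg (mul_nonneg (hPn k) (hQn l))
            (tsum_nonneg fun m => (hνnice k l).1 _))
          (mul_nonneg (mul_nonneg (hPn k) (hQn l)) (hB0 k l))]
        congr 1
        have h := hAB k l
        rw [← mul_add, h, mul_one]
      calc (∑' k : ℕ, ∑' l : ℕ, ENNReal.ofReal (poisP dp k * poisP dm l
            * (∑' m : ℕ, convZ (convPow p k) (convPow (flipM p) l) (1 + (m:ℤ)))))
          + (∑' k : ℕ, ∑' l : ℕ, ENNReal.ofReal (poisP dp k * poisP dm l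
            * (∑' m : ℕ, convZ (convPow p k) (convPow (flipM p) l) (-(m:ℤ)))))
          = ∑' k : ℕ, ((∑' l : ℕ, ENNReal.ofReal (poisP dp k * poisP dm l
              * (∑' m : ℕ, convZ (convPow p k) (convPow (flipM p) l) (1 + (m:ℤ)))))
            + (∑' l : ℕ, ENNReal.ofReal (poisP dp k * poisP dm l
              * (∑' m : ℕ, convZ (convPow p k) (convPow (flipM p) l) (-(m:ℤ)))))) :=
            (ENNReal.tsum_add).symm
        _ = ∑' k : ℕ, ∑' l : ℕ, (ENNReal.ofReal (poisP dp k * poisP dm l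
              * (∑' m : ℕ, convZ (convPow p k) (convPow (flipM p) l) (1 + (m:ℤ))))
            + ENNReal.ofReal (poisP dp k * poisP dm l
              * (∑' m : ℕ, convZ (convPow p k) (convPow (flipM p) l) (-(m:ℤ))))) :=
            tsum_congr fun k => (ENNReal.tsum_add).symm
        _ = ∑' k : ℕ, ∑' l : ℕ, ENNReal.ofReal (poisP dp k * poisP dm l) :=
            tsum_congr fun k => tsum_congr fun l => hptw k l
        _ = 1 := hPQ1
    have hX'le1 : (∑' k : ℕ, ∑' l : ℕ, ENNReal.ofReal (poisP dp k * poisP dm l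
        * (∑' m : ℕ, convZ (convPow p k) (convPow (flipM p) l) (1 + (m:ℤ))))) ≤ 1 := by
      rw [← hXX]
      exact le_self_add
    have hne : (∑' m : ℕ, ENNReal.ofReal (Zdist dp dm p (1 + (m:ℤ)))) ≠ ⊤ := by
      rw [hex2]
      exact ne_top_of_le_ne_top ENNReal.one_ne_top hX'le1
    have hs2 : Summable (fun m : ℕ => Zdist dp dm p (1 + (m:ℤ))) := by
      have h := ENNReal.summable_toReal hne
      refine h.congr fun m => ?_
      rw [ENNReal.toReal_ofReal (hZnn _)]
    rw [hTwp, ← ENNReal.ofReal_le_ofReal_iff (tsum_nonneg fun m => hZnn _),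
      ENNReal.ofReal_tsum_of_nonneg (fun m => hZnn _) hs2, hex2]
    calc ENNReal.ofReal (1 - (dp ^ 10)⁻¹)
        = 1 - ENNReal.ofReal ((dp ^ 10)⁻¹) := by
          rw [ENNReal.ofReal_sub _ (by positivity), ENNReal.ofReal_one]
      _ ≤ 1 - (∑' k : ℕ, ∑' l : ℕ, ENNReal.ofReal (poisP dp k * poisP dm l
          * (∑' m : ℕ, convZ (convPow p k) (convPow (flipM p) l) (-(m:ℤ))))) :=
          tsub_le_tsub_left hXle 1
      _ ≤ (∑' k : ℕ, ∑' l : ℕ, ENNReal.ofReal (poisP dp k * poisP dm l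
          * (∑' m : ℕ, convZ (convPow p k) (convPow (flipM p) l) (1 + (m:ℤ))))) := by
          rw [tsub_le_iff_right]
          exact le_of_eq hXX.symm
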